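/- If S and T are ordered rooted binary trees sharing a common edge, then d_R(S,T) = d_R(S1,T1) + d_R(S2,T2), where (S1,T1) and (S2,T2) are the tree pairs obtained by splitting S and T at the common edge (replacing the subtree below the edge by a placeholder leaf to form the upper trees S1,T1, and taking the subtrees below the edge as S2,T2). -/
import Mathlib


inductive BT : Type
  | leaf : BT
  | node : BT → BT → BT
deriving DecidableEq

namespace BT

/-- number of internal nodes -/
def size : BT → ℕ
  | leaf => 0
  | node l r => size l + size r + 1

/-- number of leaves -/
def nl (t : BT) : ℕ := size t + 1

/-- one (right) rotation somewhere in the tree -/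
inductive Rot : BT → BT → Prop
  | root (a b c : BT) : Rot (node (node a b) c) (node a (node b c))
  | congrL {l l' : BT} (r : BT) : Rot l l' → Rot (node l r) (node l' r)
  | congrR (l : BT) {r r' : BT} : Rot r r' → Rot (node l r) (node l r')

/-- a rotation move: a right rotation or its inverse (a left rotation) -/
def Move (s t : BT) : Prop := Rot s t ∨ Rot t s

/-- `Chain n s t`: `s` is transformed into `t` by `n` rotation moves -/
inductive Chain : ℕ → BT → BT → Prop
  | refl (t : BT) : Chain 0 t t
  | step {n : ℕ} {s u t : BT} : Move s u → Chain n u t → Chain (n + 1) s t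

/-- rotation distance -/
noncomputable def dR (s t : BT) : ℕ := sInf {n | Chain n s t}

def isNode : BT → Bool
  | leaf => false
  | node _ _ => true

/-- the multiset of leaf partitions induced by internal edges, where the leaves of the
tree are numbered from `k` on, left to right; each internal edge is recorded by the
set of leaf numbers below it. -/
def iparts : BT → ℕ → Multiset (Finset ℕ)
  | leaf, _ => 0
  | node l r, k =>
      ((if isNode l then {Finset.Ico k (k + nl l)} else 0) + iparts l k)
        + ((if isNode r then {Finset.Ico (k + nl l) (k + nl l + nl r)} else 0)
            + iparts r (k + nl l))

/-- number of common edge pairs -/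
def commonEdges (s t : BT) : ℕ := ((iparts s 0) ∩ (iparts t 0)).card

/-- replace the `i`-th leaf (numbered left to right from 0) of the first tree by the
second tree -/
def graft : BT → ℕ → BT → BT
  | leaf, 0, u => u
  | leaf, _ + 1, _ => leaf
  | node l r, i, u =>
      if i < l.nl then node (graft l i u) r else node l (graft r (i - l.nl) u)

@[simp] lemma nl_node (l r : BT) : nl (node l r) = nl l + nl r := by
  simp [nl, size]; omega

lemma nl_pos (t : BT) : 0 < nl t := by simp [nl]

lemma Rot.size_eq {s t : BT} (h : Rot s t) : size s = size t := by
  induction h <;> simp [size] <;> omega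

lemma Move.size_eq {s t : BT} (h : Move s t) : size s = size t := by
  rcases h with h | h
  · exact h.size_eq
  · exact h.size_eq.symm

lemma Move.symm {s t : BT} (h : Move s t) : Move t s := Or.symm h

lemma Chain.append {m n : ℕ} {s u t : BT} (h1 : Chain m s u) (h2 : Chain n u t) :
    Chain (m + n) s t := by
  induction h1 with
  | refl => simpa using h2
  | step hm _ ih =>
    have := Chain.step hm (ih h2)
    convert this using 1
    omega

lemma Chain.symm {n : ℕ} {s t : BT} (h : Chain n s t) : Chain n t s := by
  induction h with
  | refl => exact .refl _
  | step hm _ ih =>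
    have := ih.append (Chain.step hm.symm (.refl _))
    simpa using this

lemma Chain.size_eq {n : ℕ} {s t : BT} (h : Chain n s t) : size s = size t := by
  induction h with
  | refl => rfl
  | step hm _ ih => exact hm.size_eq.trans ih

lemma Chain.congrL {n : ℕ} {l l' : BT} (r : BT) (h : Chain n l l') :
    Chain n (node l r) (node l' r) := by
  induction h with
  | refl => exact .refl _
  | step hm _ ih =>
    refine Chain.step ?_ ih
    rcases hm with hm | hm
    · exact Or.inl (Rot.congrL r hm)
    · exact Or.inr (Rot.congrL r hm)

lemma Chain.congrR {n : ℕ} (l : BT) {r r' : BT} (h : Chain n r r') :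
    Chain n (node l r) (node l r') := by
  induction h with
  | refl => exact .refl _
  | step hm _ ih =>
    refine Chain.step ?_ ih
    rcases hm with hm | hm
    · exact Or.inl (Rot.congrR l hm)
    · exact Or.inr (Rot.congrR l hm)

def comb : ℕ → BT
  | 0 => leaf
  | n + 1 => node leaf (comb n)

lemma comb_size (n : ℕ) : size (comb n) = n := by
  induction n with
  | zero => rfl
  | succ n ih => simp [comb, size, ih]

lemma comb_merge (a b : ℕ) : ∃ n, Chain n (node (comb a) (comb b)) (comb (a + b + 1)) := by
  induction a with
  | zero => exact ⟨0, by simpa [comb] using Chain.refl (node leaf (comb b))⟩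
  | succ a ih =>
    obtain ⟨n, h⟩ := ih
    refine ⟨n + 1, ?_⟩
    have h1 : Move (node (comb (a+1)) (comb b)) (node leaf (node (comb a) (comb b))) :=
      Or.inl (Rot.root leaf (comb a) (comb b))
    have h2 : Chain n (node leaf (node (comb a) (comb b))) (comb (a + 1 + b + 1)) := by
      have := Chain.congrR leaf h
      simpa [comb, Nat.add_assoc, Nat.add_comm, Nat.add_left_comm] using this
    exact Chain.step h1 h2

lemma chain_to_comb (t : BT) : ∃ n, Chain n t (comb (size t)) := by
  induction t with
  | leaf => exact ⟨0, .refl _⟩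
  | node l r ihl ihr =>
    obtain ⟨n1, hl⟩ := ihl
    obtain ⟨n2, hr⟩ := ihr
    obtain ⟨n3, hm⟩ := comb_merge (size l) (size r)
    exact ⟨n1 + n2 + n3, ((hl.congrL r).append (Chain.congrR _ hr)).append (by
      simpa [size] using hm)⟩

lemma chain_exists {s t : BT} (h : size s = size t) : ∃ n, Chain n s t := by
  obtain ⟨n1, h1⟩ := chain_to_comb s
  obtain ⟨n2, h2⟩ := chain_to_comb t
  rw [h] at h1
  exact ⟨n1 + n2, h1.append h2.symm⟩

lemma dR_le {n : ℕ} {s t : BT} (h : Chain n s t) : dR s t ≤ n := Nat.sInf_le h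

lemma dR_chain {s t : BT} (h : size s = size t) : Chain (dR s t) s t := by
  obtain ⟨n, hn⟩ := chain_exists h
  have hne : ({k | Chain k s t} : Set ℕ).Nonempty := ⟨n, by simp only [Set.mem_setOf_eq]; exact hn⟩
  exact Nat.sInf_mem hne


lemma graft_node (l r : BT) (i : ℕ) (u : BT) : graft (node l r) i u =
    if i < l.nl then node (graft l i u) r else node l (graft r (i - l.nl) u) := rfl

lemma nl_leaf : nl leaf = 1 := rfl

lemma size_graft (t : BT) (i : ℕ) (u : BT) (hi : i < nl t) :
    size (graft t i u) = size t + size u := by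
  induction t generalizing i with
  | leaf =>
    have : i = 0 := by have := nl_leaf; omega
    subst this; simp [graft, size]
  | node l r ihl ihr =>
    rw [graft_node]
    split
    · rename_i h; simp [size, ihl i h]; omega
    · rename_i h
      have h2 : i - nl l < nl r := by
        have := nl_node l r; have := nl_pos l; have := nl_pos r; omega
      simp [size, ihr _ h2]; omega

lemma rot_graft_left {s s' : BT} (i : ℕ) (u : BT) (h : Rot s s') :
    Rot (graft s i u) (graft s' i u) := by
  induction h generalizing i with
  | root a b c =>
    by_cases h1 : i < nl a
    · have h2 : i < nl (node a b) := by simp [nl_node]; omega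
      rw [graft_node, if_pos h2, graft_node, if_pos h1, graft_node, if_pos h1]
      exact Rot.root _ _ _
    · by_cases h2 : i < nl a + nl b
      · have h2' : i < nl (node a b) := by simp [nl_node]; omega
        rw [graft_node, if_pos h2', graft_node, if_neg h1, graft_node, if_neg h1,
            graft_node, if_pos (show i - nl a < nl b by omega)]
        exact Rot.root _ _ _
      · have h2' : ¬ i < nl (node a b) := by simp [nl_node]; omega
        rw [graft_node, if_neg h2', graft_node, if_neg h1, graft_node,
            if_neg (show ¬ i - nl a < nl b by omega)]
        have e : i - nl (node a b) = i - nl a - nl b := by simp [nl_node]; omega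
        rw [e]
        exact Rot.root _ _ _
  | congrL r hr ih =>
    rename_i l l'
    have hnl : nl l = nl l' := by simp [nl, hr.size_eq]
    rw [graft_node, graft_node, ← hnl]
    split
    · exact Rot.congrL _ (ih i)
    · exact Rot.congrL _ hr
  | congrR l hr ih =>
    rw [graft_node, graft_node]
    split
    · exact Rot.congrR _ hr
    · exact Rot.congrR _ (ih _)

lemma rot_graft_right (t : BT) (i : ℕ) {u v : BT} (hi : i < nl t) (h : Rot u v) :
    Rot (graft t i u) (graft t i v) := by
  induction t generalizing i with
  | leaf =>
    have : i = 0 := by have := nl_leaf; omega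
    subst this; simpa [graft] using h
  | node l r ihl ihr =>
    rw [graft_node, graft_node]
    split
    · exact Rot.congrL _ (ihl _ ‹_›)
    · rename_i hneg
      refine Rot.congrR _ (ihr _ ?_)
      have := nl_node l r; omega

lemma chain_graft_left {n : ℕ} {s t : BT} (i : ℕ) (u : BT) (h : Chain n s t) :
    Chain n (graft s i u) (graft t i u) := by
  induction h with
  | refl => exact .refl _
  | step hm _ ih =>
    refine Chain.step ?_ ih
    rcases hm with hm | hm
    · exact Or.inl (rot_graft_left i u hm)
    · exact Or.inr (rot_graft_left i u hm)

lemma chain_graft_right {n : ℕ} (t : BT) (i : ℕ) {u v : BT} (hi : i < nl t)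
    (h : Chain n u v) : Chain n (graft t i u) (graft t i v) := by
  induction h with
  | refl => exact .refl _
  | step hm _ ih =>
    refine Chain.step ?_ ih
    rcases hm with hm | hm
    · exact Or.inl (rot_graft_right t i hi hm)
    · exact Or.inr (rot_graft_right t i hi hm)


def combine : Option BT → Option BT → Option BT
  | none, x => x
  | some a, none => some a
  | some a, some b => some (node a b)

def restr (A : ℕ → Bool) : BT → ℕ → Option BT
  | leaf, k => if A k then some leaf else none
  | node l r, k => combine (restr A l k) (restr A r (k + nl l))

@[simp] lemma combine_none_left (x : Option BT) : combine none x = x := by cases x <;> rfl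
@[simp] lemma combine_none_right (x : Option BT) : combine x none = x := by cases x <;> rfl
@[simp] lemma combine_some_some (a b : BT) : combine (some a) (some b) = some (node a b) := rfl

lemma restr_leaf (A : ℕ → Bool) (k : ℕ) :
    restr A leaf k = if A k then some leaf else none := rfl
lemma restr_node' (A : ℕ → Bool) (l r : BT) (k : ℕ) :
    restr A (node l r) k = combine (restr A l k) (restr A r (k + nl l)) := rfl

lemma combine_isSome (x y : Option BT) :
    (combine x y).isSome = (x.isSome || y.isSome) := by
  cases x <;> cases y <;> rfl

lemma restr_isSome (A : ℕ → Bool) (t : BT) (k : ℕ) :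
    (restr A t k).isSome = true ↔ ∃ j, k ≤ j ∧ j < k + nl t ∧ A j = true := by
  induction t generalizing k with
  | leaf =>
    rw [restr_leaf]
    split
    · rename_i h
      simp only [Option.isSome_some, true_iff]
      exact ⟨k, le_refl _, by have := nl_leaf; omega, h⟩
    · rename_i h
      simp only [Option.isSome_none, Bool.false_eq_true, false_iff]
      rintro ⟨j, h1, h2, h3⟩
      have : j = k := by have := nl_leaf; omega
      subst this; exact h h3
  | node l r ihl ihr =>
    rw [restr_node', combine_isSome]
    rw [Bool.or_eq_true, ihl, ihr]
    constructor
    · rintro (⟨j, h1, h2, h3⟩ | ⟨j, h1, h2, h3⟩)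
      · exact ⟨j, h1, by have := nl_node l r; omega, h3⟩
      · exact ⟨j, by omega, by have := nl_node l r; omega, h3⟩
    · rintro ⟨j, h1, h2, h3⟩
      by_cases hj : j < k + nl l
      · exact Or.inl ⟨j, h1, hj, h3⟩
      · exact Or.inr ⟨j, by omega, by have := nl_node l r; omega, h3⟩

lemma restr_full (A : ℕ → Bool) (t : BT) (k : ℕ)
    (h : ∀ j, k ≤ j → j < k + nl t → A j = true) : restr A t k = some t := by
  induction t generalizing k with
  | leaf =>
    rw [restr_leaf, if_pos (h k (le_refl _) (by have := nl_leaf; omega))]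
  | node l r ihl ihr =>
    rw [restr_node', ihl _ (fun j h1 h2 => h j h1 (by have := nl_node l r; omega)),
      ihr _ (fun j h1 h2 => h j (by omega) (by have := nl_node l r; omega))]
    rfl

lemma restr_empty (A : ℕ → Bool) (t : BT) (k : ℕ)
    (h : ∀ j, k ≤ j → j < k + nl t → A j = false) : restr A t k = none := by
  induction t generalizing k with
  | leaf =>
    rw [restr_leaf, if_neg]
    simp [h k (le_refl _) (by have := nl_leaf; omega)]
  | node l r ihl ihr =>
    rw [restr_node', ihl _ (fun j h1 h2 => h j h1 (by have := nl_node l r; omega)),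
      ihr _ (fun j h1 h2 => h j (by omega) (by have := nl_node l r; omega))]
    rfl

lemma restr_single (A : ℕ → Bool) (t : BT) (k : ℕ) (h0 : A k = true)
    (h : ∀ j, k < j → j < k + nl t → A j = false) : restr A t k = some leaf := by
  induction t generalizing k with
  | leaf => rw [restr_leaf, if_pos h0]
  | node l r ihl ihr =>
    rw [restr_node', ihl _ h0 (fun j h1 h2 => h j h1 (by have := nl_node l r; omega)),
      restr_empty _ _ _ (fun j h1 h2 => h j (by have := nl_pos l; omega)
        (by have := nl_node l r; omega))]
    rfl

lemma rot_restr (A : ℕ → Bool) {u v : BT} (h : Rot u v) (k : ℕ) :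
    restr A u k = restr A v k ∨
      ∃ x y, restr A u k = some x ∧ restr A v k = some y ∧ Rot x y := by
  induction h generalizing k with
  | root a b c =>
    rw [restr_node', restr_node', restr_node', restr_node']
    have e : k + nl (node a b) = k + nl a + nl b := by rw [nl_node]; omega
    have e2 : k + nl a + nl (node b c) = k + nl a + nl b + nl c := by rw [nl_node]; omega
    rw [e]
    rcases ha : restr A a k with _ | x <;> rcases hb : restr A b (k + nl a) with _ | y <;>
      rcases hc : restr A c (k + nl a + nl b) with _ | z <;> simp [combine]
    exact Or.inr (Rot.root x y z)
  | congrL r hr ih =>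
    rename_i l l'
    have hnl : nl l = nl l' := by simp [nl, hr.size_eq]
    rw [restr_node', restr_node', ← hnl]
    rcases ih k with heq | ⟨x, y, hx, hy, hxy⟩
    · rw [heq]; exact Or.inl rfl
    · rw [hx, hy]
      rcases hR : restr A r (k + nl l) with _ | b
      · exact Or.inr ⟨x, y, rfl, rfl, hxy⟩
      · exact Or.inr ⟨node x b, node y b, rfl, rfl, Rot.congrL b hxy⟩
  | congrR l hr ih =>
    rw [restr_node', restr_node']
    rcases ih (k + nl l) with heq | ⟨x, y, hx, hy, hxy⟩
    · rw [heq]; exact Or.inl rfl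
    · rw [hx, hy]
      rcases hL : restr A l k with _ | a
      · exact Or.inr ⟨x, y, rfl, rfl, hxy⟩
      · exact Or.inr ⟨node a x, node a y, rfl, rfl, Rot.congrR a hxy⟩

lemma combine_assoc' (x y z : Option BT) (h : x = none ∨ y = none ∨ z = none) :
    combine (combine x y) z = combine x (combine y z) := by
  rcases x with _ | a <;> rcases y with _ | b <;> rcases z with _ | c <;> simp_all [combine]

lemma rot_one (p m : ℕ) {u v : BT} (h : Rot u v) (k : ℕ) :
    restr (fun j => decide (p ≤ j ∧ j < p + m)) u k
        = restr (fun j => decide (p ≤ j ∧ j < p + m)) v k ∨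
      restr (fun j => decide (j ≤ p ∨ p + m ≤ j)) u k
        = restr (fun j => decide (j ≤ p ∨ p + m ≤ j)) v k := by
  set A1 : ℕ → Bool := fun j => decide (p ≤ j ∧ j < p + m) with hA1
  set A2 : ℕ → Bool := fun j => decide (j ≤ p ∨ p + m ≤ j) with hA2
  induction h generalizing k with
  | root a b c =>
    have e : k + nl (node a b) = k + nl a + nl b := by rw [nl_node]; omega
    by_cases H1 : restr A1 a k = none ∨ restr A1 b (k + nl a) = none ∨
        restr A1 c (k + nl a + nl b) = none
    · left
      rw [restr_node', restr_node', restr_node', restr_node', e]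
      exact combine_assoc' _ _ _ H1
    · by_cases H2 : restr A2 a k = none ∨ restr A2 b (k + nl a) = none ∨
          restr A2 c (k + nl a + nl b) = none
      · right
        rw [restr_node', restr_node', restr_node', restr_node', e]
        exact combine_assoc' _ _ _ H2
      · exfalso
        push_neg at H1 H2
        obtain ⟨H1a, H1b, H1c⟩ := H1
        obtain ⟨H2a, H2b, H2c⟩ := H2
        rw [Option.ne_none_iff_isSome, restr_isSome] at H1a H1b H1c H2a H2b H2c
        obtain ⟨j1, hj1a, hj1b, hj1c⟩ := H1a
        obtain ⟨j3, hj3a, hj3b, hj3c⟩ := H1c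
        obtain ⟨j2, hj2a, hj2b, hj2c⟩ := H2b
        rw [hA1] at hj1c hj3c
        rw [hA2] at hj2c
        simp only [decide_eq_true_eq] at hj1c hj3c hj2c
        omega
  | congrL r hr ih =>
    rename_i l l'
    have hnl : nl l = nl l' := by simp [nl, hr.size_eq]
    rcases ih k with heq | heq
    · left; rw [restr_node', restr_node', ← hnl, heq]
    · right; rw [restr_node', restr_node', ← hnl, heq]
  | congrR l hr ih =>
    rcases ih (k + nl l) with heq | heq
    · left; rw [restr_node', restr_node', heq]
    · right; rw [restr_node', restr_node', heq]


lemma move_restr (A : ℕ → Bool) {u v : BT} (h : Move u v) (k : ℕ) :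
    restr A u k = restr A v k ∨
      ∃ x y, restr A u k = some x ∧ restr A v k = some y ∧ Move x y := by
  rcases h with h | h
  · rcases rot_restr A h k with heq | ⟨x, y, hx, hy, hxy⟩
    · exact Or.inl heq
    · exact Or.inr ⟨x, y, hx, hy, Or.inl hxy⟩
  · rcases rot_restr A h k with heq | ⟨x, y, hx, hy, hxy⟩
    · exact Or.inl heq.symm
    · exact Or.inr ⟨y, x, hy, hx, Or.inr hxy⟩

lemma move_one (p m : ℕ) {u v : BT} (h : Move u v) (k : ℕ) :
    restr (fun j => decide (p ≤ j ∧ j < p + m)) u k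
        = restr (fun j => decide (p ≤ j ∧ j < p + m)) v k ∨
      restr (fun j => decide (j ≤ p ∨ p + m ≤ j)) u k
        = restr (fun j => decide (j ≤ p ∨ p + m ≤ j)) v k := by
  rcases h with h | h
  · exact rot_one p m h k
  · rcases rot_one p m h k with heq | heq
    · exact Or.inl heq.symm
    · exact Or.inr heq.symm

lemma chain_project (p m : ℕ) {n : ℕ} {u v : BT} (h : Chain n u v) :
    ∃ n1 n2, n1 + n2 ≤ n ∧
      Chain n1 ((restr (fun j => decide (p ≤ j ∧ j < p + m)) u 0).getD leaf)
        ((restr (fun j => decide (p ≤ j ∧ j < p + m)) v 0).getD leaf) ∧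
      Chain n2 ((restr (fun j => decide (j ≤ p ∨ p + m ≤ j)) u 0).getD leaf)
        ((restr (fun j => decide (j ≤ p ∨ p + m ≤ j)) v 0).getD leaf) := by
  induction h with
  | refl => exact ⟨0, 0, by omega, .refl _, .refl _⟩
  | step hm hc ih =>
    obtain ⟨n1, n2, hle, h1, h2⟩ := ih
    rename_i nn s w t
    rcases move_one p m hm 0 with heq | heq
    · -- A1 projection unchanged; A2 may move
      rcases move_restr (fun j => decide (j ≤ p ∨ p + m ≤ j)) hm 0 with
        heq2 | ⟨x, y, hx, hy, hxy⟩
      · exact ⟨n1, n2, by omega, by rwa [heq], by rwa [heq2]⟩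
      · refine ⟨n1, n2 + 1, by omega, by rwa [heq], ?_⟩
        rw [hx]
        refine Chain.step ?_ h2
        rw [hy]
        simpa using hxy
    · rcases move_restr (fun j => decide (p ≤ j ∧ j < p + m)) hm 0 with
        heq2 | ⟨x, y, hx, hy, hxy⟩
      · exact ⟨n1, n2, by omega, by rwa [heq2], by rwa [heq]⟩
      · refine ⟨n1 + 1, n2, by omega, ?_, by rwa [heq]⟩
        rw [hx]
        refine Chain.step ?_ h1
        rw [hy]
        simpa using hxy

lemma nl_graft (t : BT) (i : ℕ) (u : BT) (hi : i < nl t) :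
    nl (graft t i u) = nl t + size u := by
  simp [nl, size_graft t i u hi]; omega

lemma restr_graft_low (t : BT) (i k : ℕ) (u : BT) (hi : i < nl t) :
    restr (fun j => decide (k + i ≤ j ∧ j < k + i + nl u)) (graft t i u) k = some u := by
  induction t generalizing i k with
  | leaf =>
    have hi0 : i = 0 := by have := nl_leaf; omega
    subst hi0
    show restr _ u k = some u
    apply restr_full
    intro j h1 h2
    simp only [decide_eq_true_eq]
    omega
  | node l r ihl ihr =>
    rw [graft_node]
    split
    · rename_i h
      rw [restr_node', ihl i k h, nl_graft l i u h,
        restr_empty _ r _ (by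
          intro j h1 h2
          simp only [decide_eq_false_iff_not, not_and, not_lt]
          intro
          have := nl_pos l
          have hnlu : nl u = size u + 1 := rfl
          omega)]
      rfl
    · rename_i h
      have h2 : i - nl l < nl r := by have := nl_node l r; omega
      have := ihr (i - nl l) (k + nl l) h2
      have e : k + nl l + (i - nl l) = k + i := by omega
      rw [e] at this
      rw [restr_node', this,
        restr_empty _ l k (by
          intro j h1 hjl
          simp only [decide_eq_false_iff_not, not_and, not_lt]
          intro
          omega)]
      rfl

lemma restr_graft_up (t : BT) (i k : ℕ) (u : BT) (hi : i < nl t) :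
    restr (fun j => decide (j ≤ k + i ∨ k + i + nl u ≤ j)) (graft t i u) k = some t := by
  induction t generalizing i k with
  | leaf =>
    have hi0 : i = 0 := by have := nl_leaf; omega
    subst hi0
    show restr _ u k = some leaf
    apply restr_single
    · simp only [decide_eq_true_eq]; omega
    · intro j h1 h2
      simp only [decide_eq_false_iff_not, not_or, not_le]
      omega
  | node l r ihl ihr =>
    rw [graft_node]
    split
    · rename_i h
      rw [restr_node', ihl i k h, nl_graft l i u h,
        restr_full _ r _ (by
          intro j h1 h2
          simp only [decide_eq_true_eq]
          have := nl_pos l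
          right; have : nl u = size u + 1 := rfl
          omega)]
      rfl
    · rename_i h
      have h2 : i - nl l < nl r := by have := nl_node l r; omega
      have := ihr (i - nl l) (k + nl l) h2
      have e : k + nl l + (i - nl l) = k + i := by omega
      rw [e] at this
      rw [restr_node', this,
        restr_full _ l k (by
          intro j h1 hjl
          simp only [decide_eq_true_eq]
          left
          omega)]
      rfl


theorem splitting_lemma (S1 T1 S2 T2 : BT) (i : ℕ)
    (hsz1 : S1.size = T1.size) (hi : i < S1.nl) (hsz2 : S2.size = T2.size)
    (hS2 : S2 ≠ leaf) (hT2 : T2 ≠ leaf) :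
    dR (graft S1 i S2) (graft T1 i T2) = dR S1 T1 + dR S2 T2 := by
  have hiT : i < nl T1 := by
    have : nl S1 = nl T1 := by simp [nl, hsz1]
    omega
  have hmT : nl T2 = nl S2 := by simp [nl, hsz2]
  have hle : dR (graft S1 i S2) (graft T1 i T2) ≤ dR S1 T1 + dR S2 T2 := by
    have c1 : Chain (dR S1 T1) S1 T1 := dR_chain hsz1
    have c2 : Chain (dR S2 T2) S2 T2 := dR_chain hsz2
    have l2 : Chain (dR S2 T2) (graft S1 i S2) (graft S1 i T2) :=
      chain_graft_right S1 i hi c2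
    have l1 : Chain (dR S1 T1) (graft S1 i T2) (graft T1 i T2) :=
      chain_graft_left i T2 c1
    have := dR_le (l2.append l1)
    omega
  have hsz : size (graft S1 i S2) = size (graft T1 i T2) := by
    rw [size_graft _ _ _ hi, size_graft _ _ _ hiT, hsz1, hsz2]
  have hc : Chain (dR (graft S1 i S2) (graft T1 i T2)) (graft S1 i S2) (graft T1 i T2) :=
    dR_chain hsz
  obtain ⟨n1, n2, hle2, h1, h2⟩ := chain_project i (nl S2) hc
  have e1 : restr (fun j => decide (i ≤ j ∧ j < i + nl S2)) (graft S1 i S2) 0 = some S2 := by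
    have := restr_graft_low S1 i 0 S2 hi
    simpa using this
  have e2 : restr (fun j => decide (i ≤ j ∧ j < i + nl S2)) (graft T1 i T2) 0 = some T2 := by
    have := restr_graft_low T1 i 0 T2 hiT
    rw [hmT] at this
    simpa using this
  have e3 : restr (fun j => decide (j ≤ i ∨ i + nl S2 ≤ j)) (graft S1 i S2) 0 = some S1 := by
    have := restr_graft_up S1 i 0 S2 hi
    simpa using this
  have e4 : restr (fun j => decide (j ≤ i ∨ i + nl S2 ≤ j)) (graft T1 i T2) 0 = some T1 := by
    have := restr_graft_up T1 i 0 T2 hiT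
    rw [hmT] at this
    simpa using this
  rw [e1, e2] at h1
  rw [e3, e4] at h2
  simp only [Option.getD_some] at h1 h2
  have g1 := dR_le h1
  have g2 := dR_le h2
  omega


end BT
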